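/- For every rooted binary tree T with n ≥ 1 leaves, C(T) - S(T) ≤ -2n + 2, with equality if and only if T is the caterpillar tree on n leaves. -/
import Mathlib


/-- Rooted binary trees: a leaf, or an internal vertex with two child subtrees. -/
inductive BTree where
  | leaf : BTree
  | node : BTree → BTree → BTree
deriving DecidableEq

namespace BTree

/-- Number of leaves of a rooted binary tree. -/
def numLeaves : BTree → ℕ
  | leaf => 1
  | node l r => numLeaves l + numLeaves r

/-- Sackin index: sum over internal vertices `v` of `n_{v_a} + n_{v_b}`. -/
def sackin : BTree → ℕ
  | leaf => 0
  | node l r => sackin l + sackin r + (numLeaves l + numLeaves r)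

/-- Colless index: sum over internal vertices `v` of `|n_{v_a} - n_{v_b}|`. -/
def colless : BTree → ℕ
  | leaf => 0
  | node l r =>
      colless l + colless r +
        (max (numLeaves l) (numLeaves r) - min (numLeaves l) (numLeaves r))

/-- `N_a`: sum over internal vertices of the larger child-subtree leaf count. -/
def Na : BTree → ℕ
  | leaf => 0
  | node l r => Na l + Na r + max (numLeaves l) (numLeaves r)

/-- `N_b`: sum over internal vertices of the smaller child-subtree leaf count. -/
def Nb : BTree → ℕ
  | leaf => 0
  | node l r => Nb l + Nb r + min (numLeaves l) (numLeaves r)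

/-- `Δ_CS = C - S`, as an integer. -/
def deltaCS (T : BTree) : ℤ := (colless T : ℤ) - (sackin T : ℤ)

/-- Caterpillar trees: every internal vertex has at least one leaf child. -/
def isCaterpillar : BTree → Prop
  | leaf => True
  | node l r => (l = leaf ∧ isCaterpillar r) ∨ (r = leaf ∧ isCaterpillar l)

/-- The fully balanced tree of height `h`. -/
def fbTree : ℕ → BTree
  | 0 => leaf
  | h + 1 => node (fbTree h) (fbTree h)

end BTree

namespace BTree

lemma one_le_numLeaves (T : BTree) : 1 ≤ numLeaves T := by
  induction T with
  | leaf => simp [numLeaves]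
  | node l r ihl ihr => simp [numLeaves]; omega

lemma numLeaves_eq_one {T : BTree} (h : numLeaves T = 1) : T = leaf := by
  cases T with
  | leaf => rfl
  | node l r =>
    have h1 := one_le_numLeaves l
    have h2 := one_le_numLeaves r
    simp [numLeaves] at h; omega

lemma sackin_eq (T : BTree) : sackin T = colless T + 2 * Nb T := by
  induction T with
  | leaf => rfl
  | node l r ihl ihr =>
    simp only [sackin, colless, Nb, ihl, ihr]
    rcases le_total (numLeaves l) (numLeaves r) with h | h <;>
      simp [max_eq_right, max_eq_left, min_eq_left, min_eq_right, h] <;> omega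

lemma key (T : BTree) :
    numLeaves T ≤ Nb T + 1 ∧ (numLeaves T = Nb T + 1 ↔ isCaterpillar T) := by
  induction T with
  | leaf => simp [numLeaves, Nb, isCaterpillar]
  | node l r ihl ihr =>
    obtain ⟨hl, hle⟩ := ihl
    obtain ⟨hr, hre⟩ := ihr
    have h1 := one_le_numLeaves l
    have h2 := one_le_numLeaves r
    have hmin : 1 ≤ min (numLeaves l) (numLeaves r) := le_min h1 h2
    constructor
    · simp only [numLeaves, Nb]; omega
    · simp only [numLeaves, Nb, isCaterpillar]
      constructor
      · intro h
        have hm : min (numLeaves l) (numLeaves r) = 1 := by omega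
        have hl' : numLeaves l = Nb l + 1 := by omega
        have hr' : numLeaves r = Nb r + 1 := by omega
        rcases le_total (numLeaves l) (numLeaves r) with hc | hc
        · left
          rw [min_eq_left hc] at hm
          exact ⟨numLeaves_eq_one hm, hre.mp hr'⟩
        · right
          rw [min_eq_right hc] at hm
          exact ⟨numLeaves_eq_one hm, hle.mp hl'⟩
      · rintro (⟨rfl, hc⟩ | ⟨rfl, hc⟩)
        · have : numLeaves r = Nb r + 1 := hre.mpr hc
          simp [numLeaves, Nb, min_eq_left h2] at *
          omega
        · have : numLeaves l = Nb l + 1 := hle.mpr hc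
          simp [numLeaves, Nb, min_eq_right h1] at *
          omega

end BTree

open BTree in
/-- `C(T) - S(T) ≤ -2n + 2`, with equality iff `T` is the caterpillar tree. -/
theorem colless_sub_sackin_le (T : BTree) :
    (colless T : ℤ) - (sackin T : ℤ) ≤ -2 * (numLeaves T : ℤ) + 2 ∧
      ((colless T : ℤ) - (sackin T : ℤ) = -2 * (numLeaves T : ℤ) + 2 ↔
        isCaterpillar T) := by
  obtain ⟨h1, h2⟩ := key T
  have hs := sackin_eq T
  constructor
  · have : (numLeaves T : ℤ) ≤ (Nb T : ℤ) + 1 := by exact_mod_cast h1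
    have : (sackin T : ℤ) = (colless T : ℤ) + 2 * (Nb T : ℤ) := by exact_mod_cast hs
    omega
  · constructor
    · intro h
      have hs' : (sackin T : ℤ) = (colless T : ℤ) + 2 * (Nb T : ℤ) := by exact_mod_cast hs
      apply h2.mp
      omega
    · intro h
      have := h2.mpr h
      have hn : (numLeaves T : ℤ) = (Nb T : ℤ) + 1 := by exact_mod_cast this
      have hs' : (sackin T : ℤ) = (colless T : ℤ) + 2 * (Nb T : ℤ) := by exact_mod_cast hs
      omega
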